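/- Let X be a compactum. The multiplication κ is associative: κX ∘ D(κX) = κX ∘ κ_{DX} as maps D(D(DX)) → DX. Consequently the triple (D, ε, κ) is a monad on the category of compacta. -/

import Mathlib

/-- Membership in `DX`: an upper semicontinuous function `X → [-∞, 0]`
attaining the maximal value `0`. -/
def MemD {X : Type*} [TopologicalSpace X] (f : X → EReal) : Prop :=
  UpperSemicontinuous f ∧ (∀ x, f x ≤ 0) ∧ ∃ x, f x = 0
/-- The space `DX` of densities. -/
structure Dspace (X : Type*) [TopologicalSpace X] where
  toFun : X → EReal
  memD : MemD toFun

/-- The topology on `DX` generated by the subbase of sets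
`S₋(A,t) = {f : f(a) < t for all a ∈ A}` (`A` closed, `t ∈ [-∞,0]`) and
`S₊(U,t) = {f : f(a) > t for some a ∈ U}` (`U` open, `t ∈ [-∞,0]`). -/
instance (X : Type*) [TopologicalSpace X] : TopologicalSpace (Dspace X) :=
  TopologicalSpace.generateFrom
    ({S | ∃ (A : Set X) (t : EReal), IsClosed A ∧ t ≤ 0 ∧
        S = {f : Dspace X | ∀ a ∈ A, f.toFun a < t}} ∪
     {S | ∃ (U : Set X) (t : EReal), IsOpen U ∧ t ≤ 0 ∧
        S = {f : Dspace X | ∃ a ∈ U, t < f.toFun a}})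
open Classical in
/-- The unit `εX(x) ∈ DX`: `εX(x)(y) = 0` if `y = x` and `-∞` otherwise. -/
noncomputable def epsFun {X : Type*} (x : X) : X → EReal :=
  fun y => if y = x then 0 else ⊥

/-- The multiplication `κX(F)(x) = max{f(x) + F(f) : f ∈ DX}` for `F : DX → [-∞,0]`. -/
noncomputable def kappaFun (X : Type*) [TopologicalSpace X] (F : Dspace X → EReal) :
    X → EReal :=
  fun x => ⨆ f : Dspace X, f.toFun x + F f

/-- For a compactum `X`, the multiplication `κ` is associative:
`κX ∘ D(κX) = κX ∘ κ_{DX}` as maps `D(D(DX)) → DX`.  Together with the unit laws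
(restated below) this makes `(D, ε, κ)` a monad on the category of compacta.
(Here `D(κX)(G)(g) = max G(κX⁻¹(g)) = ⨆{G(F) : κX(F) = g}`.) -/

lemma ereal_add_iSup {ι : Sort*} (a : EReal) (ha : a ≠ ⊤) (g : ι → EReal) :
    a + ⨆ i, g i = ⨆ i, a + g i := by
  refine le_antisymm ?_ (iSup_le fun i => add_le_add le_rfl (le_iSup g i))
  induction a with
  | bot => simp
  | top => exact absurd rfl ha
  | coe a =>
    set T := ⨆ i, (a : EReal) + g i with hT
    have h1 : ⨆ i, g i ≤ T - (a : EReal) := by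
      refine iSup_le fun i => ?_
      rw [EReal.le_sub_iff_add_le (.inl (EReal.coe_ne_bot a)) (.inl (EReal.coe_ne_top a))]
      rw [add_comm]
      exact le_iSup (fun i => (a : EReal) + g i) i
    calc (a : EReal) + ⨆ i, g i ≤ a + (T - a) := add_le_add le_rfl h1
      _ = (T - a) + a := add_comm _ _
      _ = T := EReal.sub_add_cancel

lemma ereal_iSup_add {ι : Sort*} (a : EReal) (ha : a ≠ ⊤) (g : ι → EReal) :
    (⨆ i, g i) + a = ⨆ i, g i + a := by
  rw [add_comm, ereal_add_iSup a ha]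
  simp [add_comm]

lemma exists_real_pq (a b : EReal) (ha : a ≠ ⊤) (hb : b ≠ ⊤) (s : ℝ) (h : a + b < (s : EReal)) :
    ∃ p q : ℝ, a < p ∧ b < q ∧ (p : EReal) + q ≤ s := by
  induction a with
  | top => exact absurd rfl ha
  | bot =>
    obtain ⟨q, hq⟩ : ∃ q : ℝ, b < q := by
      induction b with
      | top => exact absurd rfl hb
      | bot => exact ⟨0, by simp⟩
      | coe b => exact ⟨b + 1, by exact_mod_cast lt_add_one b⟩
    exact ⟨s - q, q, bot_lt_iff_ne_bot.2 (EReal.coe_ne_bot _), hq, by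
      rw [← EReal.coe_add]; norm_num⟩
  | coe a =>
    induction b with
    | top => exact absurd rfl hb
    | bot =>
      exact ⟨a + 1, s - a - 1, by exact_mod_cast lt_add_one a,
        bot_lt_iff_ne_bot.2 (EReal.coe_ne_bot _), by rw [← EReal.coe_add]; norm_num⟩
    | coe b =>
      have hab : a + b < s := by exact_mod_cast h
      refine ⟨a + (s - a - b) / 2, b + (s - a - b) / 2, ?_, ?_, ?_⟩
      · exact_mod_cast (by linarith : a < a + (s - a - b) / 2)
      · exact_mod_cast (by linarith : b < b + (s - a - b) / 2)
      · rw [← EReal.coe_add]; exact_mod_cast (by linarith : a + (s-a-b)/2 + (b + (s-a-b)/2) ≤ s)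
section
open Filter Topology
variable {X : Type*} [TopologicalSpace X]

lemma Dspace.le_zero (f : Dspace X) (x : X) : f.toFun x ≤ 0 := f.memD.2.1 x

lemma kappa_le_zero (F : Dspace X → EReal) (hF : ∀ f, F f ≤ 0) (x : X) :
    kappaFun X F x ≤ 0 :=
  iSup_le fun f => add_nonpos (f.le_zero x) (hF f)

lemma memD_epsFun [T1Space X] (x : X) : MemD (epsFun x) := by
  refine ⟨?_, fun y => ?_, ⟨x, by simp [epsFun]⟩⟩
  · rw [upperSemicontinuous_iff_isOpen_preimage]
    intro t
    rcases le_or_gt t 0 with ht | ht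
    · rcases le_or_gt t ⊥ with hb | hb
      · convert isOpen_empty
        ext z
        simp only [Set.mem_preimage, Set.mem_Iio, Set.mem_empty_iff_false, iff_false, not_lt]
        exact le_of_eq (le_bot_iff.1 hb) |>.trans bot_le
      · convert isOpen_compl_singleton (x := x)
        ext z
        simp only [Set.mem_preimage, Set.mem_Iio, Set.mem_compl_iff, Set.mem_singleton_iff,
          epsFun]
        split_ifs with h
        · subst h
          constructor
          · intro hlt; exact absurd (lt_of_le_of_lt ht hlt) (by simp)
          · intro hc; exact absurd rfl hc
        · exact ⟨fun _ => h, fun _ => hb⟩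
    · convert isOpen_univ
      ext z
      simp only [Set.mem_preimage, Set.mem_Iio, Set.mem_univ, iff_true, epsFun]
      split_ifs with h
      · exact ht
      · exact lt_of_le_of_lt bot_le ht  -- ⊥ < t
  · simp only [epsFun]; split_ifs <;> simp

omit [TopologicalSpace X] in
lemma epsFun_inj {x y : X} (h : epsFun x = epsFun y) : x = y := by
  by_contra hne
  have := congrFun h x
  simp only [epsFun, if_pos rfl, if_neg hne] at this
  exact absurd this (by simp)

end
section main
open Filter Topology
variable {X : Type*} [TopologicalSpace X]

/-- The subbase for the topology on `Dspace X`. -/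
def Dsub (X : Type*) [TopologicalSpace X] : Set (Set (Dspace X)) :=
  {S | ∃ (A : Set X) (t : EReal), IsClosed A ∧ t ≤ 0 ∧
      S = {f : Dspace X | ∀ a ∈ A, f.toFun a < t}} ∪
  {S | ∃ (U : Set X) (t : EReal), IsOpen U ∧ t ≤ 0 ∧
      S = {f : Dspace X | ∃ a ∈ U, t < f.toFun a}}

lemma Dspace.nhds_eq (f : Dspace X) :
    𝓝 f = ⨅ s ∈ {s | f ∈ s ∧ s ∈ Dsub X}, Filter.principal s :=
  TopologicalSpace.nhds_generateFrom (g := Dsub X) (a := f)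

lemma memD_kappaFun [CompactSpace X]
    (F : Dspace X → EReal) (hF : MemD F) : MemD (kappaFun X F) := by
  obtain ⟨hFusc, hFle, f₁, hf₁⟩ := hF
  refine ⟨?_, kappa_le_zero F hFle, ?_⟩
  swap
  · obtain ⟨x₁, hx₁⟩ := f₁.memD.2.2
    refine ⟨x₁, le_antisymm (kappa_le_zero F hFle x₁) ?_⟩
    have h := le_iSup (fun f : Dspace X => f.toFun x₁ + F f) f₁
    rwa [hx₁, hf₁, add_zero] at h
  intro x t ht
  rcases lt_or_ge (0 : EReal) t with h0 | h0
  · exact Eventually.of_forall fun y => lt_of_le_of_lt (kappa_le_zero F hFle y) h0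
  obtain ⟨s, hs1, hs2⟩ := EReal.exists_between_coe_real ht
  suffices hgoal : ∀ᶠ y in 𝓝 x, kappaFun X F y ≤ (s : EReal) by
    exact hgoal.mono fun y hy => lt_of_le_of_lt hy hs2
  by_contra hc
  rw [Filter.not_eventually] at hc
  have hNB : (𝓝 x ⊓ Filter.principal {y | ¬kappaFun X F y ≤ (s : EReal)}).NeBot :=
    Filter.frequently_iff_neBot.1 hc
  obtain ⟨𝒰, h𝒰⟩ :=
    Ultrafilter.exists_le (𝓝 x ⊓ Filter.principal {y | ¬kappaFun X F y ≤ (s : EReal)})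
  have hUx : ↑𝒰 ≤ 𝓝 x := le_trans h𝒰 inf_le_left
  have hUB : ∀ᶠ y in ↑𝒰, ¬kappaFun X F y ≤ (s : EReal) :=
    le_principal_iff.1 (le_trans h𝒰 inf_le_right)
  have hch : ∀ y : X, ∃ f : Dspace X,
      ¬kappaFun X F y ≤ (s : EReal) → (s : EReal) < f.toFun y + F f := by
    intro y
    by_cases hy : kappaFun X F y ≤ (s : EReal)
    · exact ⟨f₁, fun c => absurd hy c⟩
    · obtain ⟨f, hf⟩ := lt_iSup_iff.1 (not_le.1 hy)
      exact ⟨f, fun _ => hf⟩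
  choose φ hφ using hch
  set 𝔘 : Ultrafilter (Dspace X) := 𝒰.map φ with h𝔘
  set g : Set X → Dspace X → EReal := fun W f => ⨆ w ∈ W, f.toFun w with hg
  set L : Set X → EReal := fun W => Filter.limsup (g W) ↑𝔘 with hL
  have hL0 : ∀ W, L W ≤ 0 := fun W =>
    Filter.limsup_le_of_le (by isBoundedDefault)
      (Eventually.of_forall fun f => iSup₂_le fun w _ => f.le_zero w)
  set f₀ : X → EReal := fun z => ⨅ W ∈ {W : Set X | IsOpen W ∧ z ∈ W}, L W with hf₀
  have hf₀L : ∀ (z : X) (W : Set X), IsOpen W → z ∈ W → f₀ z ≤ L W := fun z W h1 h2 =>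
    iInf₂_le W ⟨h1, h2⟩
  have hf₀le : ∀ z, f₀ z ≤ 0 := fun z =>
    (hf₀L z Set.univ isOpen_univ (Set.mem_univ z)).trans (hL0 _)
  have hlt : ∀ (z : X) (t' : EReal), f₀ z < t' →
      ∃ W : Set X, IsOpen W ∧ z ∈ W ∧ L W < t' := by
    intro z t' h
    simp only [hf₀, iInf_lt_iff, Set.mem_setOf_eq] at h
    obtain ⟨W, ⟨hW1, hW2⟩, h⟩ := h
    exact ⟨W, hW1, hW2, h⟩
  have husc : UpperSemicontinuous f₀ := by
    intro z t' hzt'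
    obtain ⟨W, hWo, hzW, hLW⟩ := hlt z t' hzt'
    filter_upwards [hWo.mem_nhds hzW] with z' hz'
    exact lt_of_le_of_lt (hf₀L z' W hWo hz') hLW
  have hmax : ∃ z, f₀ z = 0 := by
    by_contra hno
    push_neg at hno
    have h2 : ∀ z : X, ∃ W : Set X, IsOpen W ∧ z ∈ W ∧ L W < 0 := fun z =>
      hlt z 0 (lt_of_le_of_ne (hf₀le z) (hno z))
    choose W hWo hzW hLW using h2
    obtain ⟨T, hT⟩ := isCompact_univ.elim_finite_subcover W hWo
      (fun z _ => Set.mem_iUnion.2 ⟨z, hzW z⟩)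
    have hev : ∀ᶠ f in ↑𝔘, ∀ z ∈ T, g (W z) f < 0 :=
      (Filter.eventually_all_finset T).2 fun z _ =>
        Filter.eventually_lt_of_limsup_lt (by simpa only [hL] using hLW z)
    obtain ⟨f, hf⟩ := hev.exists
    obtain ⟨w, hw⟩ := f.memD.2.2
    obtain ⟨z, hzT, hwz⟩ := Set.mem_iUnion₂.1 (hT (Set.mem_univ w))
    have h3 : (0 : EReal) ≤ g (W z) f := by
      rw [← hw]
      simp only [hg]
      exact le_iSup₂ (f := fun w _ => f.toFun w) w hwz
    exact absurd (lt_of_le_of_lt h3 (hf z hzT)) (lt_irrefl 0)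
  set fhat : Dspace X := ⟨f₀, husc, hf₀le, hmax⟩ with hfhat
  have hconv : ↑𝔘 ≤ 𝓝 fhat := by
    rw [Dspace.nhds_eq]
    refine le_iInf₂ fun S hS => ?_
    rw [le_principal_iff]
    obtain ⟨hfS, hSsub⟩ := hS
    rcases hSsub with h | h
    · obtain ⟨A, t₀, hA, ht₀, rfl⟩ := h
      have hWex : ∀ a : A, ∃ W : Set X, IsOpen W ∧ (a : X) ∈ W ∧ L W < t₀ :=
        fun a => hlt a t₀ (hfS a a.2)
      choose W hWo haW hLW using hWex
      obtain ⟨T, hT⟩ := (hA.isCompact).elim_finite_subcover W hWo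
        (fun a ha => Set.mem_iUnion.2 ⟨⟨a, ha⟩, haW _⟩)
      have hev : ∀ᶠ f in ↑𝔘, ∀ a ∈ T, g (W a) f < t₀ :=
        (Filter.eventually_all_finset T).2 fun a _ =>
          Filter.eventually_lt_of_limsup_lt (by simpa only [hL] using hLW a)
      refine Filter.mem_of_superset hev ?_
      intro f hf a ha
      obtain ⟨b, hbT, hab⟩ := Set.mem_iUnion₂.1 (hT ha)
      refine lt_of_le_of_lt ?_ (hf b hbT)
      simp only [hg]
      exact le_iSup₂ (f := fun w _ => f.toFun w) a hab
    · obtain ⟨U, t₀, hU, ht₀, rfl⟩ := h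
      obtain ⟨a, haU, hta⟩ := hfS
      have hlt2 : t₀ < L U := lt_of_lt_of_le hta (hf₀L a U hU haU)
      have hfreq : ∃ᶠ f in ↑𝔘, t₀ < g U f :=
        Filter.frequently_lt_of_lt_limsup (by isBoundedDefault) (by simpa only [hL] using hlt2)
      refine Filter.mem_of_superset (Ultrafilter.frequently_iff_eventually.1 hfreq) ?_
      intro f hf
      simp only [hg, lt_iSup_iff] at hf
      obtain ⟨w, hwU, hw⟩ := hf
      exact ⟨w, hwU, hw⟩
  have hkey : (s : EReal) ≤ f₀ x + F fhat := by
    by_contra hk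
    push_neg at hk
    obtain ⟨p, q, hp, hq, hpq⟩ := exists_real_pq _ _
      (lt_of_le_of_lt (hf₀le x) (by simp) : f₀ x < ⊤).ne
      (lt_of_le_of_lt (hFle fhat) (by simp) : F fhat < ⊤).ne s hk
    have hevF : ∀ᶠ y in ↑𝒰, F (φ y) < (q : EReal) := by
      have h3 := hconv (hFusc fhat (q : EReal) hq)
      rw [h𝔘, Ultrafilter.coe_map] at h3
      exact Filter.eventually_map.1 h3
    obtain ⟨W, hWo, hxW, hLW⟩ := hlt x p hp
    have hevg : ∀ᶠ y in ↑𝒰, g W (φ y) < (p : EReal) := by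
      have h4 : ∀ᶠ f in ↑𝔘, g W f < (p : EReal) :=
        Filter.eventually_lt_of_limsup_lt (by simpa only [hL] using hLW)
      rw [h𝔘, Ultrafilter.coe_map] at h4
      exact Filter.eventually_map.1 h4
    have hevW : ∀ᶠ y in ↑𝒰, y ∈ W := hUx (hWo.mem_nhds hxW)
    obtain ⟨y, hy1, hy2, hy3, hy4⟩ := (hUB.and (hevF.and (hevg.and hevW))).exists
    have h5 : (s : EReal) < (φ y).toFun y + F (φ y) := hφ y hy1
    have h6 : (φ y).toFun y ≤ g W (φ y) := by
      simp only [hg]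
      exact le_iSup₂ (f := fun w _ => (φ y).toFun w) y hy4
    have h7 : (φ y).toFun y + F (φ y) < (p : EReal) + q :=
      EReal.add_lt_add (lt_of_le_of_lt h6 hy3) hy2
    exact absurd (lt_of_lt_of_le (h5.trans h7) hpq) (lt_irrefl _)
  have h8 : fhat.toFun x + F fhat ≤ kappaFun X F x :=
    le_iSup (fun f : Dspace X => f.toFun x + F f) fhat
  exact absurd hs1 (not_lt.2 (hkey.trans h8))

end main

theorem stmt11 {X : Type*} [TopologicalSpace X] [CompactSpace X] [T2Space X] :
    (∀ G : Dspace (Dspace (Dspace X)),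
        kappaFun X
          (fun g : Dspace X =>
            ⨆ F ∈ {F : Dspace (Dspace X) | kappaFun X F.toFun = g.toFun}, G.toFun F) =
        kappaFun X (kappaFun (Dspace X) G.toFun)) ∧
    (∀ f : Dspace X,
        kappaFun X
          (fun g : Dspace X => ⨆ x ∈ {x : X | epsFun x = g.toFun}, f.toFun x) =
        f.toFun) ∧
    (∀ f : Dspace X, kappaFun X (epsFun f) = f.toFun) := by
  have hnetop : ∀ (a : EReal), a ≤ 0 → a ≠ ⊤ := fun a ha => (ha.trans_lt (by simp)).ne
  refine ⟨?_, ?_, ?_⟩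
  · -- associativity
    intro G
    funext x
    trans (⨆ F : Dspace (Dspace X), kappaFun X F.toFun x + G.toFun F)
    · refine le_antisymm (iSup_le fun g => ?_) (iSup_le fun F => ?_)
      · rw [ereal_add_iSup _ (hnetop _ (g.le_zero x)) _]
        refine iSup_le fun F => ?_
        rw [ereal_add_iSup _ (hnetop _ (g.le_zero x)) _]
        refine iSup_le fun hF => ?_
        rw [show g.toFun x = kappaFun X F.toFun x from (congrFun hF x).symm]
        exact le_iSup (fun F : Dspace (Dspace X) => kappaFun X F.toFun x + G.toFun F) F
      · have hmem : MemD (kappaFun X F.toFun) := memD_kappaFun F.toFun F.memD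
        refine le_trans ?_ (le_iSup (fun g : Dspace X => g.toFun x +
          ⨆ F ∈ {F : Dspace (Dspace X) | kappaFun X F.toFun = g.toFun}, G.toFun F)
          ⟨kappaFun X F.toFun, hmem⟩)
        refine add_le_add le_rfl ?_
        show G.toFun F ≤ ⨆ F' ∈ {F' : Dspace (Dspace X) |
          kappaFun X F'.toFun = kappaFun X F.toFun}, G.toFun F'
        simp only [Set.mem_setOf_eq]
        exact le_iSup₂ (f := fun (F' : Dspace (Dspace X))
          (_ : kappaFun X F'.toFun = kappaFun X F.toFun) => G.toFun F') F rfl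
    · refine Eq.symm ?_
      show (⨆ f : Dspace X, f.toFun x + ⨆ F : Dspace (Dspace X), F.toFun f + G.toFun F) = _
      calc (⨆ f : Dspace X, f.toFun x + ⨆ F : Dspace (Dspace X), F.toFun f + G.toFun F)
          = ⨆ f : Dspace X, ⨆ F : Dspace (Dspace X),
              f.toFun x + (F.toFun f + G.toFun F) :=
            iSup_congr fun f => ereal_add_iSup _ (hnetop _ (f.le_zero x)) _
        _ = ⨆ F : Dspace (Dspace X), ⨆ f : Dspace X,
              f.toFun x + (F.toFun f + G.toFun F) := iSup_comm
        _ = ⨆ F : Dspace (Dspace X), (⨆ f : Dspace X, f.toFun x + F.toFun f) + G.toFun F := by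
            refine iSup_congr fun F => ?_
            rw [ereal_iSup_add _ (hnetop _ (G.le_zero F)) _]
            exact iSup_congr fun f => (add_assoc _ _ _).symm
        _ = ⨆ F : Dspace (Dspace X), kappaFun X F.toFun x + G.toFun F := rfl
  · -- left unit law
    intro f
    funext y
    refine le_antisymm (iSup_le fun g => ?_) ?_
    · by_cases hg : ∃ x, epsFun x = g.toFun
      · obtain ⟨x, hx⟩ := hg
        have hset : {x' : X | epsFun x' = g.toFun} = {x} := by
          ext x'
          simp only [Set.mem_setOf_eq, Set.mem_singleton_iff]
          exact ⟨fun h => epsFun_inj (h.trans hx.symm), fun h => h ▸ hx⟩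
        show g.toFun y + (⨆ x' ∈ {x' : X | epsFun x' = g.toFun}, f.toFun x') ≤ f.toFun y
        rw [hset]
        have hsing : (⨆ x' ∈ ({x} : Set X), f.toFun x') = f.toFun x := by simp
        rw [hsing, show g.toFun y = epsFun x y from (congrFun hx y).symm]
        simp only [epsFun]
        split_ifs with h
        · rw [h, zero_add]
        · simp
      · push_neg at hg
        have hset : {x' : X | epsFun x' = g.toFun} = ∅ := by
          ext x'; simpa using hg x'
        show g.toFun y + (⨆ x' ∈ {x' : X | epsFun x' = g.toFun}, f.toFun x') ≤ f.toFun y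
        rw [hset]
        simp
    · refine le_trans ?_ (le_iSup (fun g : Dspace X => g.toFun y +
        ⨆ x ∈ {x : X | epsFun x = g.toFun}, f.toFun x) ⟨epsFun y, memD_epsFun y⟩)
      have h1 : epsFun y y = (0 : EReal) := by simp [epsFun]
      show f.toFun y ≤ epsFun y y + ⨆ x ∈ {x : X | epsFun x = epsFun y}, f.toFun x
      rw [h1, zero_add]
      exact le_iSup₂ (f := fun (x : X) (_ : epsFun x = epsFun y) => f.toFun x) y rfl
  · -- right unit law
    intro f
    funext x
    refine le_antisymm (iSup_le fun g => ?_) ?_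
    · by_cases hg : g = f
      · subst hg; simp [epsFun]
      · simp [epsFun, hg]
    · have h := le_iSup (fun g : Dspace X => g.toFun x + epsFun f g) f
      simpa [epsFun, kappaFun] using h
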